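/- There is a universal constant C > 0 such that the following holds. Let M ⊆ ℝ^d (d ≥ 1) be bounded and ε > 0. For every β > 1, the ball carving partition of M with parameter ε is (ε, β, C·d/β)-padded: every block has diameter ≤ ε, and for every x ∈ M, ℙ_{R,σ}[ B_{ε/β}(x) ∩ M ⊄ Π(x) ] ≤ C·d/β. -/

import Mathlib

open MeasureTheory Metric Set
open scoped ENNReal NNReal

noncomputable section

/-- The Euclidean space `ℝ^d` with the `ℓ₂` metric. -/
abbrev Euc (d : ℕ) := EuclideanSpace ℝ (Fin d)

/-- The block `Π̂(uᵢ) = B_R(uᵢ) \ ⋃_{j : σ(j) < σ(i)} B_R(uⱼ)` of the ball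
carving partition built from the net `u`, radius `R` and order `σ`. -/
def carvBlock {d n : ℕ} (u : Fin n → Euc d) (R : ℝ) (σ : Equiv.Perm (Fin n))
    (i : Fin n) : Set (Euc d) :=
  ball (u i) R \ ⋃ j ∈ {j | σ j < σ i}, ball (u j) R

/-- The uniform probability measure on the interval `Ioc a b`. -/
def unifIoc (a b : ℝ) : Measure ℝ :=
  (volume (Set.Ioc a b))⁻¹ • volume.restrict (Set.Ioc a b)

instance (n : ℕ) : MeasurableSpace (Equiv.Perm (Fin n)) := ⊤

/-- The uniform probability measure on permutations of `Fin n` (a uniformly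
random linear order of the net). -/
def unifPerm (n : ℕ) : Measure (Equiv.Perm (Fin n)) :=
  (Measure.count (Set.univ : Set (Equiv.Perm (Fin n))))⁻¹ • Measure.count

/-- The joint distribution of the randomness `(R, σ)` of the ball carving
partition with parameter `ε`. -/
def carvMeasure (ε : ℝ) (n : ℕ) : Measure (ℝ × Equiv.Perm (Fin n)) :=
  (unifIoc (ε / 4) (ε / 2)).prod (unifPerm n)

/-! ### Auxiliary lemmas -/

instance (n : ℕ) : MeasurableSingletonClass (Equiv.Perm (Fin n)) :=
  ⟨fun _ => MeasurableSpace.measurableSet_top⟩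

lemma card_perm_min {n : ℕ} (Q : Finset (Fin n)) (j : Fin n) (hj : j ∈ Q) :
    (Finset.univ.filter
      (fun σ : Equiv.Perm (Fin n) => ∀ k ∈ Q, k ≠ j → σ j < σ k)).card * Q.card
      = Fintype.card (Equiv.Perm (Fin n)) := by
  classical
  set E : Fin n → Finset (Equiv.Perm (Fin n)) :=
    fun i => Finset.univ.filter (fun σ => ∀ k ∈ Q, k ≠ i → σ i < σ k) with hE
  have hcardeq : ∀ i ∈ Q, (E i).card = (E j).card := by
    intro i hi
    by_cases hji : j = i
    · subst hji; rfl
    apply Finset.card_bij' (fun σ _ => σ * Equiv.swap j i) (fun σ _ => σ * Equiv.swap j i)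
    · intro σ hσ
      simp only [hE, Finset.mem_filter, Finset.mem_univ, true_and] at hσ ⊢
      intro k hk hkj
      have hτj : Equiv.swap j i j = i := Equiv.swap_apply_left j i
      by_cases hki : k = i
      · have : σ i < σ j := hσ j hj hji
        simpa [hki, Equiv.Perm.mul_apply, hτj, Equiv.swap_apply_right] using this
      · have : σ i < σ k := hσ k hk hki
        simpa [Equiv.Perm.mul_apply, hτj, Equiv.swap_apply_of_ne_of_ne hkj hki] using this
    · intro σ hσ
      simp only [hE, Finset.mem_filter, Finset.mem_univ, true_and] at hσ ⊢
      intro k hk hki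
      have hτi : Equiv.swap j i i = j := Equiv.swap_apply_right j i
      by_cases hkj : k = j
      · have : σ j < σ i := hσ i hi (fun h => hji h.symm)
        simpa [hkj, Equiv.Perm.mul_apply, hτi, Equiv.swap_apply_left] using this
      · have : σ j < σ k := hσ k hk hkj
        simpa [Equiv.Perm.mul_apply, hτi, Equiv.swap_apply_of_ne_of_ne hkj hki] using this
    · intro σ _; ext y; simp [mul_assoc]
    · intro σ _; ext y; simp [mul_assoc]
  have hpart : (Finset.univ : Finset (Equiv.Perm (Fin n))) = Q.biUnion E := by
    apply Finset.eq_of_subset_of_card_le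
    · intro σ _
      obtain ⟨i, hi, hmin⟩ := Finset.exists_min_image Q (fun k => σ k) ⟨j, hj⟩
      refine Finset.mem_biUnion.2 ⟨i, hi, ?_⟩
      simp only [hE, Finset.mem_filter, Finset.mem_univ, true_and]
      intro k hk hki
      exact lt_of_le_of_ne (hmin k hk) (fun h => hki (σ.injective h.symm))
    · exact Finset.card_le_card (Finset.subset_univ _)
  have hdisj : ∀ i₁ ∈ Q, ∀ i₂ ∈ Q, i₁ ≠ i₂ → Disjoint (E i₁) (E i₂) := by
    intro i₁ h₁ i₂ h₂ hne
    refine Finset.disjoint_left.2 fun σ hσ₁ hσ₂ => ?_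
    simp only [hE, Finset.mem_filter, Finset.mem_univ, true_and] at hσ₁ hσ₂
    exact absurd (hσ₁ i₂ h₂ (Ne.symm hne)) (not_lt.2 (hσ₂ i₁ h₁ hne).le)
  have hcard := Finset.card_biUnion hdisj
  rw [← hpart, Finset.card_univ] at hcard
  rw [hcard, Finset.sum_congr rfl hcardeq, Finset.sum_const, smul_eq_mul, mul_comm]

lemma count_univ_perm (n : ℕ) :
    Measure.count (Set.univ : Set (Equiv.Perm (Fin n)))
      = (Fintype.card (Equiv.Perm (Fin n)) : ℝ≥0∞) := by
  rw [Measure.count_apply_finite _ (Set.finite_univ)]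
  congr 1
  simp [Set.Finite.toFinset]

lemma unifPerm_apply (n : ℕ) (s : Set (Equiv.Perm (Fin n))) :
    unifPerm n s = ((Fintype.card (Equiv.Perm (Fin n)) : ℝ≥0∞))⁻¹
      * (s.toFinite.toFinset.card : ℝ≥0∞) := by
  rw [unifPerm, Measure.smul_apply, smul_eq_mul, count_univ_perm,
    Measure.count_apply_finite _ s.toFinite]

lemma unifPerm_min {n : ℕ} (Q : Finset (Fin n)) (j : Fin n) (hj : j ∈ Q) :
    unifPerm n {σ | ∀ k ∈ Q, k ≠ j → σ j < σ k} = ((Q.card : ℝ≥0∞))⁻¹ := by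
  classical
  rw [unifPerm_apply]
  have hset : ({σ | ∀ k ∈ Q, k ≠ j → σ j < σ k} :
      Set (Equiv.Perm (Fin n))).toFinite.toFinset
      = Finset.univ.filter (fun σ : Equiv.Perm (Fin n) => ∀ k ∈ Q, k ≠ j → σ j < σ k) := by
    ext σ; simp
  rw [hset]
  have hc := card_perm_min Q j hj
  set a := (Finset.univ.filter
      (fun σ : Equiv.Perm (Fin n) => ∀ k ∈ Q, k ≠ j → σ j < σ k)).card with ha
  have hN : 0 < Fintype.card (Equiv.Perm (Fin n)) := Fintype.card_pos
  have ha0 : a ≠ 0 := by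
    intro h; rw [h, zero_mul] at hc; omega
  have hQ0 : Q.card ≠ 0 := Finset.card_ne_zero_of_mem hj
  have : ((Fintype.card (Equiv.Perm (Fin n)) : ℝ≥0∞)) = (a : ℝ≥0∞) * Q.card := by
    rw [← hc]; push_cast; ring
  rw [this, ENNReal.mul_inv (by exact Or.inl (Nat.cast_ne_zero.2 ha0)) (by simp),
    mul_comm ((a : ℝ≥0∞))⁻¹ _, mul_assoc,
    ENNReal.inv_mul_cancel (Nat.cast_ne_zero.2 ha0) (by simp), mul_one]

lemma unifPerm_univ (n : ℕ) : unifPerm n Set.univ = 1 := by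
  rw [unifPerm_apply]
  have : ((Set.univ : Set (Equiv.Perm (Fin n))).toFinite.toFinset.card : ℝ≥0∞)
      = (Fintype.card (Equiv.Perm (Fin n)) : ℝ≥0∞) := by
    congr 1; simp [Set.Finite.toFinset]
  rw [this, ENNReal.inv_mul_cancel (by exact_mod_cast Fintype.card_pos.ne') (by simp)]

instance (n : ℕ) : IsProbabilityMeasure (unifPerm n) := ⟨unifPerm_univ n⟩

lemma unifIoc_apply (a b : ℝ) (s : Set ℝ) :
    unifIoc a b s = (volume (Set.Ioc a b))⁻¹ * volume (s ∩ Set.Ioc a b) := by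
  rw [unifIoc, Measure.smul_apply, smul_eq_mul,
    Measure.restrict_apply' measurableSet_Ioc]

lemma unifIoc_compl (a b : ℝ) : unifIoc a b (Set.Ioc a b)ᶜ = 0 := by
  rw [unifIoc_apply, Set.compl_inter_self, measure_empty, mul_zero]

lemma unifIoc_le (a b c d : ℝ) :
    unifIoc a b (Set.Ioc c d) ≤ (ENNReal.ofReal (b - a))⁻¹ * ENNReal.ofReal (d - c) := by
  rw [unifIoc_apply, Real.volume_Ioc]
  exact mul_le_mul_right (le_trans (measure_mono Set.inter_subset_left)
    (by rw [Real.volume_Ioc])) _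

lemma sum_inv_rank {α γ : Type*} [LinearOrder γ] [DecidableEq α] (f : α → γ) :
    ∀ (m : ℕ) (T : Finset α), T.card = m → Set.InjOn f T →
    ∑ j ∈ T, ((T.filter (fun k => f k ≤ f j)).card : ℝ)⁻¹
      = ∑ i ∈ Finset.range m, ((i : ℝ) + 1)⁻¹ := by
  intro m
  induction m with
  | zero => intro T hT _; rw [Finset.card_eq_zero] at hT; simp [hT]
  | succ p ih =>
    intro T hT hinj
    have hne : T.Nonempty := Finset.card_pos.1 (by omega)
    obtain ⟨j₀, hj₀, hmax⟩ := Finset.exists_max_image T f hne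
    have hfT : T.filter (fun k => f k ≤ f j₀) = T :=
      Finset.filter_true_of_mem (fun k hk => hmax k hk)
    have hTE : T = insert j₀ (T.erase j₀) := (Finset.insert_erase hj₀).symm
    have hcardE : (T.erase j₀).card = p := by
      rw [Finset.card_erase_of_mem hj₀, hT]; omega
    have hstep : ∀ j ∈ T.erase j₀,
        T.filter (fun k => f k ≤ f j) = (T.erase j₀).filter (fun k => f k ≤ f j) := by
      intro j hjmem
      have hjT : j ∈ T := Finset.mem_of_mem_erase hjmem
      have hjne : j ≠ j₀ := Finset.ne_of_mem_erase hjmem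
      have hnotle : ¬ f j₀ ≤ f j := by
        intro hle
        exact hjne (hinj hjT hj₀ (le_antisymm (hmax j hjT) hle))
      conv_lhs => rw [hTE]
      rw [Finset.filter_insert, if_neg hnotle]
    have hsum : ∑ j ∈ T, ((T.filter (fun k => f k ≤ f j)).card : ℝ)⁻¹
        = ((T.filter (fun k => f k ≤ f j₀)).card : ℝ)⁻¹
          + ∑ j ∈ T.erase j₀, ((T.filter (fun k => f k ≤ f j)).card : ℝ)⁻¹ := by
      rw [hTE, Finset.sum_insert (Finset.notMem_erase _ _)]
      rw [← hTE]
    rw [hsum, hfT, hT]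
    have hrec : ∑ j ∈ T.erase j₀, ((T.filter (fun k => f k ≤ f j)).card : ℝ)⁻¹
        = ∑ i ∈ Finset.range p, ((i : ℝ) + 1)⁻¹ := by
      rw [Finset.sum_congr rfl (fun j hj => by rw [hstep j hj])]
      exact ih (T.erase j₀) hcardE (hinj.mono (fun y hy => Finset.mem_of_mem_erase hy))
    rw [hrec, Finset.sum_range_succ]
    push_cast
    ring

lemma euc_nontrivial {d : ℕ} (hd : 1 ≤ d) : Nontrivial (Euc d) := by
  refine ⟨⟨EuclideanSpace.single ⟨0, hd⟩ 1, 0, ?_⟩⟩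
  intro h
  have := congrArg norm h
  simp [EuclideanSpace.norm_single] at this

lemma packing_card {d : ℕ} (hd : 1 ≤ d) {ι : Type*} [DecidableEq ι]
    (T : Finset ι) (u : ι → Euc d) (x : Euc d) {s D : ℝ} (hs : 0 < s) (hD : 0 ≤ D)
    (hsep : ∀ i ∈ T, ∀ j ∈ T, i ≠ j → 2 * s ≤ dist (u i) (u j))
    (hin : ∀ i ∈ T, dist (u i) x < D) :
    (T.card : ℝ) * s ^ d ≤ (D + s) ^ d := by
  haveI := euc_nontrivial hd
  set v := volume (ball (0 : Euc d) 1) with hv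
  have hball : ∀ (y : Euc d) (r : ℝ), 0 ≤ r →
      volume (ball y r) = ENNReal.ofReal (r ^ d) * v := by
    intro y r hr
    rw [Measure.addHaar_ball volume y hr, finrank_euclideanSpace_fin]
  have hdisj : (T : Set ι).PairwiseDisjoint (fun i => ball (u i) s) := by
    intro i hi j hj hij
    exact ball_disjoint_ball (by linarith [hsep i hi j hj hij])
  have hmeas : ∀ i ∈ T, MeasurableSet (ball (u i) s) := fun i _ => measurableSet_ball
  have hsub : (⋃ i ∈ T, ball (u i) s) ⊆ ball x (D + s) := by
    intro y hy
    simp only [Set.mem_iUnion] at hy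
    obtain ⟨i, hi, hyi⟩ := hy
    have : dist y x ≤ dist y (u i) + dist (u i) x := dist_triangle _ _ _
    rw [mem_ball] at hyi ⊢
    linarith [hin i hi]
  have hle : ∑ i ∈ T, volume (ball (u i) s) ≤ volume (ball x (D + s)) := by
    rw [← measure_biUnion_finset hdisj hmeas]
    exact measure_mono hsub
  rw [Finset.sum_congr rfl (fun i _ => hball (u i) s hs.le), Finset.sum_const,
    hball x (D + s) (by linarith), nsmul_eq_mul, ← mul_assoc] at hle
  have hv0 : v ≠ 0 := (measure_ball_pos volume _ one_pos).ne'
  have hvtop : v ≠ ⊤ := measure_ball_lt_top.ne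
  have hle2 : (T.card : ℝ≥0∞) * ENNReal.ofReal (s ^ d) ≤ ENNReal.ofReal ((D + s) ^ d) :=
    (ENNReal.mul_le_mul_iff_left hv0 hvtop).1 hle
  have : ENNReal.ofReal ((T.card : ℝ) * s ^ d) ≤ ENNReal.ofReal ((D + s) ^ d) := by
    rw [ENNReal.ofReal_mul (by positivity), ENNReal.ofReal_natCast]
    exact hle2
  exact (ENNReal.ofReal_le_ofReal_iff (by positivity)).1 this

/-! ### The main theorem -/

/-- Corollary 2: there is a universal constant `C > 0` such that for every
bounded `M ⊆ ℝ^d` (`d ≥ 1`), every `ε > 0` and every `β > 1`, the ball carving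
partition of `M` with parameter `ε` (built from a finite `ε/4`-net
`u : Fin n → ℝ^d` of `M`) is `(ε, β, C·d/β)`-padded: every block has diameter
at most `ε`, and for every `x ∈ M` the probability that `B_{ε/β}(x) ∩ M` is not
contained in the block of `x` is at most `C·d/β`. -/
theorem stmt10 : ∃ C : ℝ, 0 < C ∧
    ∀ (d n : ℕ), 1 ≤ d →
    ∀ M : Set (Euc d), Bornology.IsBounded M →
    ∀ (ε β : ℝ), 0 < ε → 1 < β →
    ∀ u : Fin n → Euc d, (∀ i, u i ∈ M) →
    (∀ i j, i ≠ j → ε / 4 ≤ dist (u i) (u j)) →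
    M ⊆ (⋃ i, ball (u i) (ε / 4)) →
    ((∀ R ∈ Set.Ioc (ε / 4) (ε / 2), ∀ (σ : Equiv.Perm (Fin n)) (i : Fin n),
        EMetric.diam (carvBlock u R σ i) ≤ ENNReal.ofReal ε) ∧
      ∀ x ∈ M, carvMeasure ε n
          {p | ¬ ∃ i, ball x (ε / β) ∩ M ⊆ carvBlock u p.1 p.2 i} ≤
        ENNReal.ofReal (C * d / β)) := by
  classical
  refine ⟨104, by norm_num, ?_⟩
  intro d n hd M hM ε β hε hβ u huM husep hucov
  constructor
  · -- diameter bound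
    intro R hR σ i
    refine EMetric.diam_le ?_
    intro y hy z hz
    have hy' : y ∈ ball (u i) R := hy.1
    have hz' : z ∈ ball (u i) R := hz.1
    rw [mem_ball] at hy' hz'
    have : dist y z ≤ dist y (u i) + dist (u i) z := dist_triangle _ _ _
    rw [edist_dist]
    refine ENNReal.ofReal_le_ofReal ?_
    have := dist_comm z (u i)
    nlinarith [hR.2, dist_comm z (u i)]
  · -- padding bound
    intro x hx
    set ρ := ε / β with hρdef
    have hρ : 0 < ρ := div_pos hε (by linarith)
    have hρε : ρ < ε := by
      rw [hρdef, div_lt_iff₀ (by linarith)]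
      nlinarith
    set dj : Fin n → ℝ := fun j => dist x (u j) with hdj
    set T : Finset (Fin n) := Finset.univ.filter (fun j => dj j < ε / 2 + ρ) with hT
    set K : Fin n → Lex (ℝ × Fin n) := fun j => toLex (dj j, j) with hK
    set Q : Fin n → Finset (Fin n) := fun j => T.filter (fun k => K k ≤ K j) with hQ
    set A : Fin n → Set (Equiv.Perm (Fin n)) :=
      fun j => {σ | ∀ k ∈ Q j, k ≠ j → σ j < σ k} with hA
    set Bad : Fin n → Set (ℝ × Equiv.Perm (Fin n)) :=
      fun j => (Set.Ioc (dj j - ρ) (dj j + ρ)) ×ˢ A j with hBad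
    -- key deterministic inclusion
    have hincl : {p : ℝ × Equiv.Perm (Fin n) |
          ¬ ∃ i, ball x (ε / β) ∩ M ⊆ carvBlock u p.1 p.2 i}
        ⊆ ((Set.Ioc (ε / 4) (ε / 2))ᶜ ×ˢ (Set.univ : Set (Equiv.Perm (Fin n))))
          ∪ ⋃ j ∈ T, Bad j := by
      rintro ⟨R, σ⟩ hp
      by_cases hR : R ∈ Set.Ioc (ε / 4) (ε / 2)
      · right
        set S : Finset (Fin n) := Finset.univ.filter (fun k => dj k < R + ρ) with hS
        have hSne : S.Nonempty := by
          obtain ⟨k, hk⟩ := Set.mem_iUnion.1 (hucov hx)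
          rw [mem_ball] at hk
          exact ⟨k, by simp only [hS, Finset.mem_filter, Finset.mem_univ, true_and]
                       exact lt_of_lt_of_le hk (by linarith [hR.1])⟩
        obtain ⟨i₀, hi₀S, hmin⟩ := Finset.exists_min_image S (fun k => σ k) hSne
        have hi₀lt : dj i₀ < R + ρ := by
          have := hi₀S
          simp only [hS, Finset.mem_filter, Finset.mem_univ, true_and] at this
          exact this
        have hi₀T : i₀ ∈ T := by
          simp only [hT, Finset.mem_filter, Finset.mem_univ, true_and]
          linarith [hR.2]
        have hAσ : σ ∈ A i₀ := by
          intro k hk hki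
          simp only [hQ, Finset.mem_filter] at hk
          have hdk : dj k ≤ dj i₀ := by
            rcases Prod.Lex.le_iff.1 hk.2 with h | h
            · exact h.le
            · exact h.1.le
          have hkS : k ∈ S := by
            simp only [hS, Finset.mem_filter, Finset.mem_univ, true_and]
            linarith
          exact lt_of_le_of_ne (hmin k hkS)
            (fun h => hki (σ.injective h.symm))
        by_cases hRI : R ∈ Set.Ioc (dj i₀ - ρ) (dj i₀ + ρ)
        · exact Set.mem_biUnion hi₀T ⟨hRI, hAσ⟩
        · exfalso
          have hfar : dj i₀ + ρ < R := by
            rcases not_and_or.1 hRI with h | h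
            · exact absurd (by linarith : dj i₀ - ρ < R) h
            · exact lt_of_not_ge h
          refine hp ⟨i₀, ?_⟩
          rintro y ⟨hy, -⟩
          rw [mem_ball] at hy
          constructor
          · rw [mem_ball]
            have : dist y (u i₀) ≤ dist y x + dist x (u i₀) := dist_triangle _ _ _
            have hyx : dist y x < ρ := hy
            simp only [hdj] at hfar hi₀lt
            linarith
          · intro hmem
            rw [Set.mem_iUnion₂] at hmem
            obtain ⟨k, hkσ, hyk⟩ := hmem
            rw [mem_ball] at hyk
            have hkS : k ∉ S := by
              intro hkS
              exact absurd (hmin k hkS) (not_le.2 hkσ)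
            have hdk : R + ρ ≤ dj k := by
              by_contra h
              exact hkS (by simp only [hS, Finset.mem_filter, Finset.mem_univ, true_and]
                            linarith)
            have : dj k ≤ dist x y + dist y (u k) := dist_triangle _ _ _
            rw [dist_comm x y] at this
            have hyx : dist y x < ρ := hy
            linarith
      · exact Or.inl ⟨hR, trivial⟩
    -- measure computation
    have hmeasle := measure_mono (μ := carvMeasure ε n) hincl
    have hsplit := measure_union_le (μ := carvMeasure ε n)
      (((Set.Ioc (ε / 4) (ε / 2))ᶜ ×ˢ (Set.univ : Set (Equiv.Perm (Fin n)))))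
      (⋃ j ∈ T, Bad j)
    have hleft : carvMeasure ε n
        (((Set.Ioc (ε / 4) (ε / 2))ᶜ ×ˢ (Set.univ : Set (Equiv.Perm (Fin n))))) = 0 := by
      rw [carvMeasure, Measure.prod_prod, unifIoc_compl, zero_mul]
    have hbadle : ∀ j ∈ T, carvMeasure ε n (Bad j)
        ≤ ENNReal.ofReal (8 / β * (((Q j).card : ℝ))⁻¹) := by
      intro j hj
      have hjQ : j ∈ Q j := by
        simp only [hQ, Finset.mem_filter]
        exact ⟨hj, le_refl _⟩
      have hcard : 0 < (Q j).card := Finset.card_pos.2 ⟨j, hjQ⟩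
      rw [hBad, carvMeasure, Measure.prod_prod]
      have h1 : unifIoc (ε / 4) (ε / 2) (Set.Ioc (dj j - ρ) (dj j + ρ))
          ≤ ENNReal.ofReal (8 / β) := by
        refine le_trans (unifIoc_le _ _ _ _) ?_
        have he1 : ε / 2 - ε / 4 = ε / 4 := by ring
        have he2 : dj j + ρ - (dj j - ρ) = 2 * ρ := by ring
        rw [he1, he2]
        have heq : (8 : ℝ) / β = 2 * ρ / (ε / 4) := by
          rw [hρdef]; field_simp; ring
        have key : ENNReal.ofReal (2 * ρ / (ε / 4))
            = (ENNReal.ofReal (ε / 4))⁻¹ * ENNReal.ofReal (2 * ρ) := by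
          rw [ENNReal.ofReal_div_of_pos (by linarith), div_eq_mul_inv, mul_comm]
        rw [heq, key]
      have h2 : unifPerm n (A j) = (((Q j).card : ℝ≥0∞))⁻¹ := unifPerm_min (Q j) j hjQ
      rw [h2]
      have h3 : (((Q j).card : ℝ≥0∞))⁻¹ = ENNReal.ofReal ((((Q j).card : ℝ))⁻¹) := by
        rw [ENNReal.ofReal_inv_of_pos (by exact_mod_cast hcard), ENNReal.ofReal_natCast]
      rw [h3, ENNReal.ofReal_mul (by positivity : (0:ℝ) ≤ 8 / β)]
      exact mul_le_mul_left h1 _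
    have hsum : carvMeasure ε n (⋃ j ∈ T, Bad j)
        ≤ ∑ j ∈ T, ENNReal.ofReal (8 / β * (((Q j).card : ℝ))⁻¹) :=
      le_trans (measure_biUnion_finset_le T Bad) (Finset.sum_le_sum hbadle)
    -- the real-valued estimate
    have hKinj : Set.InjOn K (T : Set (Fin n)) := by
      intro a _ b _ h
      have := toLex.injective h
      exact congrArg Prod.snd this
    have hrank := sum_inv_rank K T.card T rfl hKinj
    -- packing bound : T.card ≤ 13 ^ d
    have hpack : (T.card : ℝ) ≤ 13 ^ d := by
      have h8 : (0 : ℝ) < ε / 8 := by linarith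
      have := packing_card hd T u x (s := ε / 8) (D := 3 * ε / 2) h8 (by linarith)
        (fun i _ j _ hij => by
          have := husep i j hij
          linarith)
        (fun i hi => by
          simp only [hT, Finset.mem_filter, Finset.mem_univ, true_and] at hi
          rw [dist_comm]
          simp only [hdj] at hi
          linarith)
      have hpow : (0 : ℝ) < (ε / 8) ^ d := by positivity
      have h13 : (3 * ε / 2 + ε / 8) ^ d = 13 ^ d * (ε / 8) ^ d := by
        rw [← mul_pow]; congr 1; ring
      rw [h13] at this
      exact le_of_mul_le_mul_right this hpow
    have hharm : ∑ i ∈ Finset.range T.card, ((i : ℝ) + 1)⁻¹ ≤ 13 * d := by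
      have h1 : ∑ i ∈ Finset.range T.card, ((i : ℝ) + 1)⁻¹ = (harmonic T.card : ℝ) := by
        rw [harmonic]
        push_cast
        rfl
      rw [h1]
      refine le_trans (harmonic_le_one_add_log _) ?_
      have hlog : Real.log (T.card : ℝ) ≤ 12 * d := by
        rcases Nat.eq_zero_or_pos T.card with h0 | h0
        · rw [h0]
          simp only [Nat.cast_zero, Real.log_zero]
          positivity
        · have hpos : (0 : ℝ) < T.card := by exact_mod_cast h0
          calc Real.log (T.card : ℝ) ≤ Real.log (13 ^ d) :=
                Real.log_le_log hpos hpack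
            _ = d * Real.log 13 := by rw [Real.log_pow]
            _ ≤ d * 12 := by
                refine mul_le_mul_of_nonneg_left ?_ (by positivity)
                linarith [Real.log_le_sub_one_of_pos (by norm_num : (0:ℝ) < 13)]
            _ = 12 * d := by ring
      have hd1 : (1 : ℝ) ≤ d := by exact_mod_cast hd
      linarith
    -- put everything together
    have hfinal : ∑ j ∈ T, (8 / β * (((Q j).card : ℝ))⁻¹) ≤ 104 * d / β := by
      have h8β : (0 : ℝ) < 8 / β := by positivity
      have : ∑ j ∈ T, (8 / β * (((Q j).card : ℝ))⁻¹)
          = 8 / β * ∑ j ∈ T, (((Q j).card : ℝ))⁻¹ := by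
        rw [Finset.mul_sum]
      rw [this]
      have hQsum : ∑ j ∈ T, (((Q j).card : ℝ))⁻¹
          = ∑ i ∈ Finset.range T.card, ((i : ℝ) + 1)⁻¹ := hrank
      rw [hQsum]
      calc 8 / β * ∑ i ∈ Finset.range T.card, ((i : ℝ) + 1)⁻¹
          ≤ 8 / β * (13 * d) := by
            refine mul_le_mul_of_nonneg_left hharm h8β.le
        _ = 104 * d / β := by ring
    calc carvMeasure ε n {p | ¬ ∃ i, ball x (ε / β) ∩ M ⊆ carvBlock u p.1 p.2 i}
        ≤ carvMeasure ε n
            ((((Set.Ioc (ε / 4) (ε / 2))ᶜ ×ˢ (Set.univ : Set (Equiv.Perm (Fin n)))))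
              ∪ ⋃ j ∈ T, Bad j) := hmeasle
      _ ≤ carvMeasure ε n
            ((((Set.Ioc (ε / 4) (ε / 2))ᶜ ×ˢ (Set.univ : Set (Equiv.Perm (Fin n))))))
          + carvMeasure ε n (⋃ j ∈ T, Bad j) := hsplit
      _ ≤ 0 + ∑ j ∈ T, ENNReal.ofReal (8 / β * (((Q j).card : ℝ))⁻¹) := by
          rw [hleft]; exact add_le_add_right hsum _
      _ = ENNReal.ofReal (∑ j ∈ T, (8 / β * (((Q j).card : ℝ))⁻¹)) := by
          rw [zero_add, ENNReal.ofReal_sum_of_nonneg (fun j _ => by positivity)]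
      _ ≤ ENNReal.ofReal (104 * d / β) := ENNReal.ofReal_le_ofReal hfinal
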